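/- Let d ≥ 1, let n > 2d, and let f ∈ ℂ[x] be a polynomial of degree d such that f(ζ) is an n-th root of unity for every n-th root of unity ζ. Then f(x) = ξ·x^d where ξ is an n-th root of unity. -/

import Mathlib

open Polynomial

theorem stmt_11 (d n : ℕ) (hd : 1 ≤ d) (hn : 2 * d < n)
    (f : ℂ[X]) (hfd : f.natDegree = d)
    (hmap : ∀ ζ : ℂ, ζ ^ n = 1 → (f.eval ζ) ^ n = 1) :
    ∃ ξ : ℂ, ξ ^ n = 1 ∧ f = C ξ * X ^ d := by
  have hn0 : 0 < n := lt_of_le_of_lt (Nat.zero_le _) hn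
  -- any root of unity has modulus 1, and conj is inverse
  have habs : ∀ z : ℂ, z ^ n = 1 → z * (starRingEnd ℂ) z = 1 := by
    intro z hz
    have h1 : ‖z‖ ^ n = 1 := by
      rw [← norm_pow, hz, norm_one]
    have h2 : ‖z‖ = 1 := by
      rcases (pow_eq_one_iff_cases.mp h1) with h | h | h
      · omega
      · exact h
      · exfalso; linarith [h.1, norm_nonneg z]
    rw [Complex.mul_conj, Complex.normSq_eq_norm_sq, h2]
    norm_num
  -- the conjugate-reflected polynomial
  set g : ℂ[X] := ∑ i ∈ Finset.range (d + 1),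
      C ((starRingEnd ℂ) (f.coeff i)) * X ^ (d - i) with hg
  have hgdeg : g.natDegree ≤ d := by
    apply Polynomial.natDegree_sum_le_of_forall_le
    intro i hi
    calc (C ((starRingEnd ℂ) (f.coeff i)) * X ^ (d - i)).natDegree
        ≤ _ := natDegree_C_mul_le _ _
      _ ≤ d := (natDegree_X_pow (R := ℂ) _).le.trans (Nat.sub_le _ _)
  -- evaluation of g on roots of unity
  have hgeval : ∀ z : ℂ, z ^ n = 1 →
      g.eval z = (starRingEnd ℂ) (f.eval z) * z ^ d := by
    intro z hz
    have hzc : z * (starRingEnd ℂ) z = 1 := habs z hz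
    have hfe : f.eval z = ∑ i ∈ Finset.range (d + 1), f.coeff i * z ^ i := by
      rw [eval_eq_sum_range, hfd]
    rw [hfe, hg]
    simp only [eval_finset_sum, eval_mul, eval_C, eval_pow, eval_X, map_sum, map_mul, map_pow,
      Finset.sum_mul]
    apply Finset.sum_congr rfl
    intro i hi
    have hile : i ≤ d := Nat.lt_succ_iff.mp (Finset.mem_range.mp hi)
    have : ((starRingEnd ℂ) z) ^ i * z ^ d = z ^ (d - i) := by
      calc ((starRingEnd ℂ) z) ^ i * z ^ d
          = ((starRingEnd ℂ) z) ^ i * (z ^ (d - i) * z ^ i) := by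
            rw [← pow_add, Nat.sub_add_cancel hile]
        _ = z ^ (d - i) * (z * (starRingEnd ℂ) z) ^ i := by ring
        _ = z ^ (d - i) := by rw [hzc, one_pow, mul_one]
    rw [← this]; ring
  -- h := f * g - X ^ d vanishes on all n-th roots of unity
  set h : ℂ[X] := f * g - X ^ d with hh
  have hheval : ∀ z : ℂ, z ^ n = 1 → h.eval z = 0 := by
    intro z hz
    have hfz : f.eval z * (starRingEnd ℂ) (f.eval z) = 1 := habs _ (hmap z hz)
    rw [hh]
    simp only [eval_sub, eval_mul, eval_pow, eval_X, hgeval z hz]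
    calc f.eval z * ((starRingEnd ℂ) (f.eval z) * z ^ d) - z ^ d
        = (f.eval z * (starRingEnd ℂ) (f.eval z)) * z ^ d - z ^ d := by ring
      _ = 0 := by rw [hfz, one_mul, sub_self]
  -- h has degree ≤ 2d < n but n distinct roots, so h = 0
  have hhdeg : h.natDegree ≤ 2 * d := by
    apply (natDegree_sub_le _ _).trans
    apply max_le
    · exact (natDegree_mul_le).trans (by omega)
    · exact (natDegree_X_pow (R := ℂ) _).le.trans (by omega)
  obtain ⟨ζ, hζ⟩ : ∃ ζ : ℂ, IsPrimitiveRoot ζ n :=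
    ⟨_, Complex.isPrimitiveRoot_exp n hn0.ne'⟩
  have hzero : h = 0 := by
    apply Polynomial.eq_zero_of_natDegree_lt_card_of_eval_eq_zero' h
      (Polynomial.nthRootsFinset n (1 : ℂ))
    · intro z hzmem
      exact hheval z ((Polynomial.mem_nthRootsFinset hn0 1).mp hzmem)
    · rw [hζ.card_nthRootsFinset]
      omega
  have hfg : f * g = X ^ d := by
    have := sub_eq_zero.mp hzero
    rwa [hh, sub_eq_zero] at hzero
  -- deduce f is a monomial
  have hf0 : f ≠ 0 := fun h0 => by
    simp [h0] at hfg
    exact pow_ne_zero d (Polynomial.X_ne_zero (R := ℂ)) hfg.symm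
  have hg0 : g ≠ 0 := fun h0 => by
    simp [h0] at hfg
    exact pow_ne_zero d (Polynomial.X_ne_zero (R := ℂ)) hfg.symm
  have hdeg_add : f.natDegree + g.natDegree = d := by
    have := natDegree_mul hf0 hg0
    rw [hfg, natDegree_X_pow] at this
    omega
  have hgdeg0 : g.natDegree = 0 := by omega
  have htrail : f.natTrailingDegree = d := by
    have := natTrailingDegree_mul hf0 hg0
    rw [hfg, natTrailingDegree_X_pow] at this
    have h2 : g.natTrailingDegree ≤ g.natDegree := natTrailingDegree_le_natDegree _
    have h3 : f.natTrailingDegree ≤ f.natDegree := natTrailingDegree_le_natDegree _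
    omega
  refine ⟨f.coeff d, ?_, ?_⟩
  · have h1 : (1 : ℂ) ^ n = 1 := one_pow n
    have := hmap 1 h1
    have he : f.eval 1 = f.coeff d := by
      rw [← hfd]
      conv_lhs => rw [eval_eq_sum_range]
      rw [Finset.sum_range_succ]
      have : ∀ i ∈ Finset.range f.natDegree, f.coeff i * (1:ℂ) ^ i = 0 := by
        intro i hi
        rw [coeff_eq_zero_of_lt_natTrailingDegree, zero_mul]
        rw [htrail, ← hfd]
        exact Finset.mem_range.mp hi
      rw [Finset.sum_eq_zero this, zero_add, one_pow, mul_one]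
    rwa [he] at this
  · ext i
    rcases lt_trichotomy i d with hi | hi | hi
    · rw [coeff_eq_zero_of_lt_natTrailingDegree (by rw [htrail]; exact hi)]
      simp [coeff_C_mul, coeff_X_pow, Nat.ne_of_lt hi]
    · subst hi
      simp [coeff_C_mul, coeff_X_pow]
    · rw [coeff_eq_zero_of_natDegree_lt (by rw [hfd]; exact hi)]
      simp [coeff_C_mul, coeff_X_pow, Nat.ne_of_gt hi]
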